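/- Let H be a hypergraph with no dominating vertex (no vertex belonging to all hyperedges) and let I'(H) be its split-incidence graph. Then the minimal total dominating sets of I'(H) are exactly the minimal transversals of H. -/
import Mathlib


open Set

variable {V ι : Type*}

/-- `T ⊆ V` is a transversal of the hypergraph whose hyperedges are `e i`, `i : ι`. -/
def TransversalI (e : ι → Set V) (T : Set V) : Prop := ∀ i, (T ∩ e i).Nonempty

/-- Auxiliary relation generating the split-incidence graph `I'(H)`:
`V(H)` is made into a clique and `x` is joined to `y_i` whenever `x ∈ e i`. -/
def SIRel (e : ι → Set V) : V ⊕ ι → V ⊕ ι → Prop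
  | Sum.inl _, Sum.inl _ => True
  | Sum.inl x, Sum.inr i => x ∈ e i
  | _, _ => False

/-- The split-incidence graph `I'(H)` of a hypergraph `H`. -/
def splitIncidence (e : ι → Set V) : SimpleGraph (V ⊕ ι) :=
  SimpleGraph.fromRel (SIRel e)

/-- `D` is a total dominating set of `G`: every vertex has a neighbour in `D`. -/
def TotalDom {W : Type*} (G : SimpleGraph W) (D : Set W) : Prop :=
  ∀ v, ∃ u ∈ D, G.Adj u v

lemma si_adj_ll (e : ι → Set V) (x y : V) :
    (splitIncidence e).Adj (Sum.inl x) (Sum.inl y) ↔ x ≠ y := by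
  simp [splitIncidence, SimpleGraph.fromRel_adj, SIRel]

lemma si_adj_lr (e : ι → Set V) (x : V) (i : ι) :
    (splitIncidence e).Adj (Sum.inl x) (Sum.inr i) ↔ x ∈ e i := by
  simp [splitIncidence, SimpleGraph.fromRel_adj, SIRel]

lemma si_adj_rr (e : ι → Set V) (i j : ι) :
    ¬ (splitIncidence e).Adj (Sum.inr i) (Sum.inr j) := by
  simp [splitIncidence, SimpleGraph.fromRel_adj, SIRel]

lemma trans_exists_ne {e : ι → Set V} (hnd : ¬ ∃ x : V, ∀ i, x ∈ e i)
    {T : Set V} (hT : TransversalI e T) (x : V) : ∃ y ∈ T, y ≠ x := by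
  push_neg at hnd
  obtain ⟨i, hi⟩ := hnd x
  obtain ⟨y, hyT, hye⟩ := hT i
  exact ⟨y, hyT, fun h => hi (h ▸ hye)⟩

lemma trans_totaldom {e : ι → Set V} (hnd : ¬ ∃ x : V, ∀ i, x ∈ e i)
    {T : Set V} (hT : TransversalI e T) :
    TotalDom (splitIncidence e) (Sum.inl '' T) := by
  intro v
  cases v with
  | inl x =>
    obtain ⟨y, hyT, hyx⟩ := trans_exists_ne hnd hT x
    exact ⟨Sum.inl y, ⟨y, hyT, rfl⟩, (si_adj_ll e y x).2 (by simpa using hyx)⟩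
  | inr i =>
    obtain ⟨y, hyT, hye⟩ := hT i
    exact ⟨Sum.inl y, ⟨y, hyT, rfl⟩, (si_adj_lr e y i).2 hye⟩

lemma dom_trans {e : ι → Set V} {D : Set (V ⊕ ι)} (hD : TotalDom (splitIncidence e) D) :
    TransversalI e {x | Sum.inl x ∈ D} := by
  intro i
  obtain ⟨u, huD, hadj⟩ := hD (Sum.inr i)
  cases u with
  | inl x => exact ⟨x, huD, (si_adj_lr e x i).1 hadj⟩
  | inr j => exact absurd hadj (si_adj_rr e j i)

/-- If the hypergraph `H` has no dominating vertex, then the minimal total dominating sets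
of its split-incidence graph `I'(H)` are exactly (the copies of) the minimal
transversals of `H`. -/
theorem stmt_7 (e : ι → Set V) (hnd : ¬ ∃ x : V, ∀ i, x ∈ e i) (D : Set (V ⊕ ι)) :
    Minimal (TotalDom (splitIncidence e)) D ↔
      ∃ T : Set V, Minimal (TransversalI e) T ∧ D = Sum.inl '' T := by
  constructor
  · rintro ⟨hD, hmin⟩
    set T := {x | Sum.inl x ∈ D} with hTdef
    have hT : TransversalI e T := dom_trans hD
    have h1 : Sum.inl '' T ⊆ D := by rintro _ ⟨x, hx, rfl⟩; exact hx
    have hDeq : D = Sum.inl '' T :=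
      (hmin (trans_totaldom hnd hT) h1).antisymm h1
    refine ⟨T, ⟨hT, ?_⟩, hDeq⟩
    intro T' hT' hsub x hx
    have hsub' : Sum.inl '' T' ⊆ D := by
      rintro _ ⟨y, hy, rfl⟩; exact hsub hy
    have := hmin (trans_totaldom hnd hT') hsub' (h1 ⟨x, hx, rfl⟩)
    obtain ⟨y, hy, hxy⟩ := this
    exact (Sum.inl.inj hxy) ▸ hy
  · rintro ⟨T, ⟨hT, hmin⟩, rfl⟩
    refine ⟨trans_totaldom hnd hT, ?_⟩
    intro D' hD' hsub
    have hT' : TransversalI e {x | Sum.inl x ∈ D'} := dom_trans hD'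
    have hsubT : {x | Sum.inl x ∈ D'} ⊆ T := by
      intro x hx
      obtain ⟨y, hy, hxy⟩ := hsub hx
      exact (Sum.inl.inj hxy) ▸ hy
    have := hmin hT' hsubT
    rintro _ ⟨x, hx, rfl⟩
    exact this hx
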